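/- For every real λ > 1 and every q ∈ (0,1/2]: H(q) < U_λ(q) + λ/(λ-1)². -/

import Mathlib

set_option maxHeartbeats 1000000


open MeasureTheory Filter

noncomputable def binEnt (p : ℝ) : ℝ :=
  -(p * Real.logb 2 p) - (1 - p) * Real.logb 2 (1 - p)

noncomputable def klBin (a b : ℝ) : ℝ :=
  a * Real.logb 2 (a / b) + (1 - a) * Real.logb 2 ((1 - a) / (1 - b))

noncomputable def pstar (lam q : ℝ) : ℝ := 1 / (1 + ((1 - q) / q) ^ (lam / (lam - 1)))

noncomputable def Ulam (lam q : ℝ) : ℝ :=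
  lam * klBin (pstar lam q) q + binEnt (pstar lam q)

lemma taylor4' (T : ℝ) (hT : 0 ≤ T) :
    1 + T + T^2/2 + T^3/6 + T^4/24 ≤ Real.exp T := by
  have h := Real.sum_le_exp_of_nonneg hT 5
  simp [Finset.sum_range_succ, Nat.factorial] at h
  convert h using 1

lemma sq_le_log2_mul (T : ℝ) (hT : 0 ≤ T) : T^2 ≤ Real.log 2 * (1 + Real.exp T) := by
  have h := taylor4' T hT
  have hl := Real.log_two_gt_d9
  nlinarith [sq_nonneg T, sq_nonneg (T-2), sq_nonneg (T^2 - 2*T), pow_nonneg hT 3, pow_nonneg hT 4]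

theorem entropy_lt_Ulam_add (lam : ℝ) (hlam : 1 < lam)
    (q : ℝ) (hq0 : 0 < q) (hq : q ≤ 1 / 2) :
    binEnt q < Ulam lam q + lam / (lam - 1) ^ 2 := by
  obtain ⟨s, hsdef⟩ : ∃ s : ℝ, s = lam - 1 := ⟨_, rfl⟩
  have hs : (0:ℝ) < s := by rw [hsdef]; linarith
  have hq1 : q < 1 := by linarith
  have h1q : (0:ℝ) < 1 - q := by linarith
  have hlog2 : (0:ℝ) < Real.log 2 := Real.log_pos one_lt_two
  obtain ⟨c, hcdef⟩ : ∃ c : ℝ, c = lam / s := ⟨_, rfl⟩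
  have hc : c * s = lam := by rw [hcdef]; field_simp
  obtain ⟨w, hwdef⟩ : ∃ w : ℝ, w = (1 - q) / q := ⟨_, rfl⟩
  have hw0 : (0:ℝ) < w := hwdef ▸ div_pos h1q hq0
  have hw1 : (1:ℝ) ≤ w := by rw [hwdef, le_div_iff₀ hq0]; linarith
  obtain ⟨T, hTdef⟩ : ∃ T : ℝ, T = Real.log w := ⟨_, rfl⟩
  have hT0 : (0:ℝ) ≤ T := hTdef ▸ Real.log_nonneg hw1
  have hwexp : Real.exp T = w := by rw [hTdef, Real.exp_log hw0]
  obtain ⟨r, hrdef⟩ : ∃ r : ℝ, r = w ^ c := ⟨_, rfl⟩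
  have hr0 : (0:ℝ) < r := hrdef ▸ Real.rpow_pos_of_pos hw0 c
  have h1r : (0:ℝ) < 1 + r := by linarith
  have hlogr : Real.log r = c * T := by rw [hrdef, Real.log_rpow hw0, hTdef]
  have hrexp : r = Real.exp (c * T) := by rw [← hlogr, Real.exp_log hr0]
  obtain ⟨p, hpdef⟩ : ∃ p : ℝ, p = 1 / (1 + r) := ⟨_, rfl⟩
  have hps : pstar lam q = p := by rw [hpdef, hrdef, hcdef, hsdef, hwdef, pstar]
  have hp0 : (0:ℝ) < p := by rw [hpdef]; positivity
  have hp1 : p < 1 := by rw [hpdef, div_lt_one h1r]; linarith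
  have h1p : 1 - p = r / (1 + r) := by rw [hpdef]; field_simp; ring
  have hlogp : Real.log p = -Real.log (1 + r) := by
    rw [hpdef, one_div, Real.log_inv]
  have hlog1p : Real.log (1 - p) = c * T - Real.log (1 + r) := by
    rw [h1p, Real.log_div hr0.ne' h1r.ne', hlogr]
  have hlogw : T = Real.log (1 - q) - Real.log q := by
    rw [hTdef, hwdef, Real.log_div h1q.ne' hq0.ne']
  have hlq1 : Real.log (1 - q) = T + Real.log q := by rw [hlogw]; ring
  -- closed form for Ulam
  have hU : Ulam lam q * Real.log 2 = -(s * Real.log (1 + r)) - lam * Real.log q := by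
    simp only [Ulam, klBin, binEnt, hps, Real.logb,
      Real.log_div hp0.ne' hq0.ne',
      Real.log_div (by linarith : (1:ℝ) - p ≠ 0) h1q.ne',
      hlogp, hlog1p, hlq1]
    field_simp
    linear_combination ((1-p)*T) * hc + (Real.log (1+r) - (1-p)*c*T) * hsdef
  -- the exponential factor
  obtain ⟨E, hEdef⟩ : ∃ E : ℝ, E = Real.exp (-(T / s)) := ⟨_, rfl⟩
  have hE0 : (0:ℝ) < E := hEdef ▸ Real.exp_pos _
  have hrE : r * E = w := by
    rw [hrexp, hEdef, ← Real.exp_add, ← hwexp]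
    congr 1
    field_simp
    linear_combination T * hc + (-T) * hsdef
  have hwE : (0:ℝ) < w + E := by positivity
  have hlog1r : Real.log (1 + r) = c * T + Real.log (w + E) - T := by
    have h1 : 1 + r = r * (w + E) / w := by
      rw [eq_div_iff hw0.ne']
      linear_combination -hrE
    rw [h1, Real.log_div (by positivity) hw0.ne', Real.log_mul hr0.ne' hwE.ne', hlogr, hTdef]
  -- bound log(w+E)
  have hb1 : Real.log (w + E) ≤ Real.log (w + 1) + (E - 1) / (w + 1) := by
    have h := Real.log_le_sub_one_of_pos (show (0:ℝ) < (w + E) / (w + 1) by positivity)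
    rw [Real.log_div hwE.ne' (by linarith : w + 1 ≠ 0)] at h
    have he : (w + E) / (w + 1) - 1 = (E - 1) / (w + 1) := by
      field_simp
      ring
    linarith [he ▸ h]
  have hb2 : Real.log (w + 1) = -Real.log q := by
    have hwq : w + 1 = 1 / q := by rw [hwdef]; field_simp; ring
    rw [hwq, one_div, Real.log_inv]
  -- bound 1 - E
  have hb3 : T ≤ (1 - E) * (s + T) := by
    have hF := Real.add_one_le_exp (T / s)
    have hEF : E * Real.exp (T / s) = 1 := by
      rw [hEdef, ← Real.exp_add]; simp
    have hsF : s + T ≤ s * Real.exp (T / s) := by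
      have h2 := mul_le_mul_of_nonneg_left hF hs.le
      have h3 : s * (T / s + 1) = s + T := by field_simp; ring
      linarith
    have hEsT : E * (s + T) ≤ s := by
      calc E * (s + T) ≤ E * (s * Real.exp (T / s)) :=
            mul_le_mul_of_nonneg_left hsF hE0.le
        _ = s * (E * Real.exp (T / s)) := by ring
        _ = s := by rw [hEF, mul_one]
    have hx : (1 - E) * (s + T) = (s + T) - E * (s + T) := by ring
    linarith
  have hb4 : T ^ 2 ≤ Real.log 2 * (1 + w) := by
    have h := sq_le_log2_mul T hT0
    rw [hwexp] at h
    linarith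
  -- key chain
  have hsT : (0:ℝ) < s + T := by linarith
  have h1w : (0:ℝ) < 1 + w := by linarith
  have hqw : (1 + w) * q = 1 := by rw [hwdef]; field_simp; ring
  have hq_eq : q = 1 / (1 + w) := eq_one_div_of_mul_eq_one_right hqw
  have G1 : (T - s * (1 - E)) * (s + T) ≤ T ^ 2 := by
    have h := mul_le_mul_of_nonneg_left hb3 hs.le
    have hx : (T - s * (1 - E)) * (s + T) = s * T + T ^ 2 - s * ((1 - E) * (s + T)) := by ring
    linarith
  have key1 : (T - s * (1 - E)) / (1 + w) ≤ Real.log 2 / (s + T) := by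
    rw [div_le_div_iff₀ h1w hsT]
    linarith [G1, hb4]
  have key2 : Real.log 2 / (s + T) ≤ Real.log 2 / s :=
    div_le_div_of_nonneg_left hlog2.le hs (by linarith)
  have key3 : Real.log 2 / s < lam / s ^ 2 * Real.log 2 := by
    have h1 : lam / s ^ 2 * Real.log 2 = (lam / s) * (Real.log 2 / s) := by
      field_simp
    have h2 : (1:ℝ) < lam / s := by
      rw [lt_div_iff₀ hs]; rw [hsdef]; linarith
    have h3 : (0:ℝ) < Real.log 2 / s := by positivity
    have h4 := mul_lt_mul_of_pos_right h2 h3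
    rw [h1]; linarith
  -- final assembly
  have hmain : q * T + s * (Real.log (w + E) + Real.log q) < lam / s ^ 2 * Real.log 2 := by
    have step1 : q * T + s * (Real.log (w + E) + Real.log q)
        ≤ q * T + s * ((E - 1) / (w + 1)) := by
      have h := hb1
      rw [hb2] at h
      have h2 := mul_le_mul_of_nonneg_left h hs.le
      have hx : s * (-Real.log q + (E - 1) / (w + 1)) = -(s * Real.log q) + s * ((E - 1) / (w + 1)) := by ring
      linarith [h2, hx]
    have step2 : q * T + s * ((E - 1) / (w + 1)) = (T - s * (1 - E)) / (1 + w) := by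
      rw [hq_eq]
      field_simp
      ring
    calc q * T + s * (Real.log (w + E) + Real.log q)
        ≤ (T - s * (1 - E)) / (1 + w) := by rw [← step2]; exact step1
      _ ≤ Real.log 2 / (s + T) := key1
      _ ≤ Real.log 2 / s := key2
      _ < lam / s ^ 2 * Real.log 2 := key3
  -- convert goal
  have hgoal : binEnt q * Real.log 2 < (Ulam lam q + lam / (lam - 1) ^ 2) * Real.log 2 := by
    rw [add_mul, hU]
    have hBent : binEnt q * Real.log 2 = -(q * Real.log q) - (1 - q) * Real.log (1 - q) := by
      simp only [binEnt, Real.logb]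
      field_simp
    rw [hBent, hlog1r, hlq1, ← hsdef]
    have hexp : s * (c * T) = lam * T := by linear_combination T * hc
    have hlamT : lam * T = s * T + T := by rw [hsdef]; ring
    have hlamLq : lam * Real.log q = s * Real.log q + Real.log q := by rw [hsdef]; ring
    linarith [hmain, hexp, hlamT, hlamLq]
  exact lt_of_mul_lt_mul_right hgoal hlog2.le
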